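/- Let v be a monotone TU-game on N, and suppose that for every T ⊆ N∖S with v(S∪T) > v(T), every proper nonempty subcoalition P ⊊ S satisfies v(P∪T) = v(T). Then for any internal family p and external family q, the coopetition index C^v_{p,q}(S) equals the probabilistic generalized value Φ^v_q(S). -/
import Mathlib

open Finset

/-- The set of unordered 2-partitions of `S` into two nonempty disjoint parts. -/
def Pi2 {ι : Type*} [DecidableEq ι] (S : Finset ι) : Finset (Finset (Finset ι)) :=
  (S.powerset.filter fun R => R ≠ ∅ ∧ R ≠ S).image fun R => {R, S \ R}

/-- The attitude of coalition `S` towards `T` under internal distribution `p` on `Pi2 S`. -/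
def attitude {ι : Type*} [DecidableEq ι] (v : Finset ι → ℝ) (p : Finset (Finset ι) → ℝ)
    (S T : Finset ι) : ℝ :=
  v (S ∪ T) - v T - ∑ π ∈ Pi2 S, p π * ((∑ B ∈ π, v (B ∪ T)) - 2 * v T)

/-- The probabilistic generalized value of `S` in the game `v` on `N`,
under external distribution `q` on subsets of `N \ S`. -/
def genValue {ι : Type*} [DecidableEq ι] (v : Finset ι → ℝ) (q : Finset ι → ℝ)
    (N S : Finset ι) : ℝ :=
  ∑ T ∈ (N \ S).powerset, q T * (v (S ∪ T) - v T)

/-- The coopetition index of `S` in the game `v` on `N`. -/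
def coop {ι : Type*} [DecidableEq ι] (v : Finset ι → ℝ) (p : Finset (Finset ι) → ℝ)
    (q : Finset ι → ℝ) (N S : Finset ι) : ℝ :=
  ∑ T ∈ (N \ S).powerset, q T * attitude v p S T

theorem coop_eq_genValue_of_essential {ι : Type*} [DecidableEq ι]
    (N S : Finset ι) (v : Finset ι → ℝ)
    (p : Finset (Finset ι) → ℝ) (q : Finset ι → ℝ)
    (hv0 : v ∅ = 0) (hmono : ∀ A B : Finset ι, A ⊆ B → B ⊆ N → v A ≤ v B)
    (hSN : S ⊆ N)
    (hp1 : ∑ π ∈ Pi2 S, p π = 1) (hp0 : ∀ π ∈ Pi2 S, 0 ≤ p π)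
    (hq1 : ∑ T ∈ (N \ S).powerset, q T = 1) (hq0 : ∀ T ∈ (N \ S).powerset, 0 ≤ q T)
    (hess : ∀ T ∈ (N \ S).powerset, v T < v (S ∪ T) →
      ∀ P : Finset ι, P ⊆ S → P ≠ ∅ → P ≠ S → v (P ∪ T) = v T) :
    coop v p q N S = genValue v q N S := by
  unfold coop genValue
  refine Finset.sum_congr rfl fun T hT => ?_
  congr 1
  have hTN : T ⊆ N \ S := Finset.mem_powerset.mp hT
  have hTN' : T ⊆ N := hTN.trans (Finset.sdiff_subset)
  have key : ∀ B : Finset ι, B ⊆ S → B ≠ ∅ → B ≠ S → v (B ∪ T) = v T := by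
    intro B hBS hB0 hBS'
    by_cases h : v T < v (S ∪ T)
    · exact hess T hT h B hBS hB0 hBS'
    · apply le_antisymm
      · calc v (B ∪ T) ≤ v (S ∪ T) := hmono _ _ (Finset.union_subset_union_left hBS)
              (Finset.union_subset hSN hTN')
          _ ≤ v T := not_lt.mp h
      · exact hmono _ _ (Finset.subset_union_right)
          (Finset.union_subset (hBS.trans hSN) hTN')
  unfold attitude
  have hz : ∀ π ∈ Pi2 S, p π * ((∑ B ∈ π, v (B ∪ T)) - 2 * v T) = 0 := by
    intro π hπ
    obtain ⟨R, hR, rfl⟩ := Finset.mem_image.mp hπ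
    simp only [Finset.mem_filter, Finset.mem_powerset] at hR
    obtain ⟨hRS, hR0, hRS'⟩ := hR
    have hd : Disjoint R (S \ R) := Finset.disjoint_sdiff
    have hne : R ≠ S \ R := by
      intro h
      apply hR0
      rw [← h] at hd
      simpa using disjoint_self.mp hd
    have h1 : S \ R ≠ ∅ := by
      intro h
      exact hRS' (le_antisymm hRS (Finset.sdiff_eq_empty_iff_subset.mp h))
    have h2 : S \ R ≠ S := by
      intro h
      apply hR0
      have : Disjoint S R := by
        rw [← Finset.sdiff_eq_self_iff_disjoint, h]
      exact Finset.eq_empty_iff_forall_notMem.mpr fun x hx =>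
        Finset.disjoint_left.mp this (hRS hx) hx
    rw [Finset.sum_pair hne, key R hRS hR0 hRS', key (S \ R) Finset.sdiff_subset h1 h2]
    ring
  rw [Finset.sum_congr rfl hz, Finset.sum_const_zero]
  ring
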